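/- For every u ∈ ℝ³ with u ≠ 0 and sin‖u‖ ≠ 0, the matrix J_u = I₃ − ((1 − cos‖u‖)/‖u‖²) u^∧ + ((‖u‖ − sin‖u‖)/‖u‖³) (u^∧)² is invertible with inverse J_u⁻¹ = I₃ + (1/2) u^∧ + (1/‖u‖² − (1 + cos‖u‖)/(2‖u‖ sin‖u‖)) (u^∧)²; that is, the product of these two matrices equals I₃. -/

import Mathlib

open Matrix

noncomputable section

/-- The `hat` map sending `u ∈ ℝ³` to the skew-symmetric matrix `u^∧` with `u^∧ v = u × v`. -/
def hat (u : EuclideanSpace ℝ (Fin 3)) : Matrix (Fin 3) (Fin 3) ℝ :=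
  !![0, -u 2, u 1; u 2, 0, -u 0; -u 1, u 0, 0]

/-- `R ∈ SO(3)`: real 3×3 matrices with `RᵀR = I` and `det R = 1`. -/
def SO3 (R : Matrix (Fin 3) (Fin 3) ℝ) : Prop := Rᵀ * R = 1 ∧ R.det = 1

/-- Matrix-vector multiplication as a map on Euclidean space. -/
def matVec (A : Matrix (Fin 3) (Fin 3) ℝ) (u : EuclideanSpace ℝ (Fin 3)) :
    EuclideanSpace ℝ (Fin 3) :=
  (WithLp.equiv 2 (Fin 3 → ℝ)).symm (A.mulVec ((WithLp.equiv 2 (Fin 3 → ℝ)) u))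

/-- The left-trivialised Jacobian of the exponential map of `SO(3)` at `u`. -/
def Jmat (u : EuclideanSpace ℝ (Fin 3)) : Matrix (Fin 3) (Fin 3) ℝ :=
  1 - ((1 - Real.cos ‖u‖) / ‖u‖ ^ 2) • hat u
    + ((‖u‖ - Real.sin ‖u‖) / ‖u‖ ^ 3) • (hat u * hat u)

/-- The claimed inverse of the Jacobian `J_u`. -/
def JmatInv (u : EuclideanSpace ℝ (Fin 3)) : Matrix (Fin 3) (Fin 3) ℝ :=
  1 + (1 / 2 : ℝ) • hat u
    + (1 / ‖u‖ ^ 2 - (1 + Real.cos ‖u‖) / (2 * ‖u‖ * Real.sin ‖u‖)) • (hat u * hat u)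


lemma hat_cube (u : EuclideanSpace ℝ (Fin 3)) :
    hat u * hat u * hat u = (-(‖u‖^2)) • hat u := by
  have hn : ‖u‖^2 = u 0 ^ 2 + u 1 ^ 2 + u 2 ^ 2 := by
    rw [EuclideanSpace.norm_eq, Real.sq_sqrt (by positivity)]
    simp [Fin.sum_univ_three, sq_abs]
  rw [hat, hn]
  ext i j
  fin_cases i <;> fin_cases j <;>
    simp [Matrix.mul_apply, Fin.sum_univ_three] <;> ring

lemma prod_eq_one (A : Matrix (Fin 3) (Fin 3) ℝ) (n p q r s : ℝ)
    (hA : A * A * A = (-(n^2)) • A)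
    (h1 : p + r - n^2*(p*s + q*r) = 0)
    (h2 : s + p*r + q - n^2*(q*s) = 0) :
    (1 + p • A + q • (A * A)) * (1 + r • A + s • (A * A)) = 1 := by
  have hA4 : A * A * (A * A) = (-(n^2)) • (A * A) := by
    rw [← mul_assoc, hA, smul_mul_assoc]
  have hA3 : A * (A * A) = (-(n^2)) • A := by rw [← mul_assoc, hA]
  have : (1 + p • A + q • (A * A)) * (1 + r • A + s • (A * A)) =
      1 + (p + r - n^2*(p*s + q*r)) • A + (s + p*r + q - n^2*(q*s)) • (A * A) := by
    simp only [add_mul, mul_add, one_mul, mul_one, smul_mul_assoc, mul_smul_comm,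
      smul_smul, hA3, hA4, hA, smul_add]
    module
  rw [this, h1, h2]
  simp

lemma coeffs (n : ℝ) (hn : n ≠ 0) (hs : Real.sin n ≠ 0) :
    (-((1 - Real.cos n) / n ^ 2)) + (1/2 : ℝ)
      - n^2*((-((1 - Real.cos n) / n ^ 2))*(1 / n ^ 2 - (1 + Real.cos n) / (2 * n * Real.sin n))
        + ((n - Real.sin n) / n ^ 3)*(1/2)) = 0 ∧
    (1 / n ^ 2 - (1 + Real.cos n) / (2 * n * Real.sin n))
      + (-((1 - Real.cos n) / n ^ 2))*(1/2) + (n - Real.sin n) / n ^ 3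
      - n^2*(((n - Real.sin n) / n ^ 3)*(1 / n ^ 2 - (1 + Real.cos n) / (2 * n * Real.sin n))) = 0 := by
  have key := Real.sin_sq_add_cos_sq n
  constructor
  · field_simp; linear_combination n*key
  · field_simp; ring_nf

/-- For `u ≠ 0` with `sin ‖u‖ ≠ 0`, the Jacobian `J_u` is invertible with the stated inverse:
the product of the two matrices equals `I₃`. -/
theorem Jmat_mul_JmatInv (u : EuclideanSpace ℝ (Fin 3)) (hu : u ≠ 0)
    (hs : Real.sin ‖u‖ ≠ 0) :
    Jmat u * JmatInv u = 1 ∧ JmatInv u * Jmat u = 1 := by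
  have hn : ‖u‖ ≠ 0 := by simpa using hu
  have hA := hat_cube u
  have hc := coeffs ‖u‖ hn hs
  have hJ : Jmat u = 1 + (-((1 - Real.cos ‖u‖) / ‖u‖ ^ 2)) • hat u
      + ((‖u‖ - Real.sin ‖u‖) / ‖u‖ ^ 3) • (hat u * hat u) := by
    rw [Jmat, sub_eq_add_neg, neg_smul]
  have hJi : JmatInv u = 1 + (1/2 : ℝ) • hat u
      + (1 / ‖u‖ ^ 2 - (1 + Real.cos ‖u‖) / (2 * ‖u‖ * Real.sin ‖u‖)) • (hat u * hat u) :=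
    rfl
  constructor
  · rw [hJ, hJi]; exact prod_eq_one _ _ _ _ _ _ hA hc.1 hc.2
  · rw [hJ, hJi]
    refine prod_eq_one _ _ _ _ _ _ hA ?_ ?_
    · linear_combination hc.1
    · linear_combination hc.2
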